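/- In the BEBA model with w_ii = 1 and β < 1/[max_i |y_i(t)|]^2 on a connected graph, if node i achieves the maximum absolute opinion at time t, then |y_i(t+1)| ≤ |y_i(t)|, with strict inequality if i has at least one neighbor with strictly smaller absolute opinion or any opposite-sign neighbor: the most opinionated node gets (weakly) moderated. -/

import Mathlib

/-- BEBA with `w_ii = 1` and `β < 1/[max_j |y_j|]^2` (equivalently
`β < 1/(y j)^2` for every node `j`) on a connected graph: if node `i` achieves
the maximum absolute opinion at time `t`, then `|y_i(t+1)| ≤ |y_i(t)|`, with
strict inequality if `i` has at least one neighbor with strictly smaller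
absolute opinion or any opposite-sign neighbor: the most opinionated node gets
(weakly) moderated. -/
theorem stmt_19 {V : Type*} [Fintype V] (G : SimpleGraph V) [DecidableRel G.Adj]
    (hconn : G.Connected)
    (β : ℝ) (hβ0 : 0 < β)
    (y : V → ℝ) (hy : ∀ j, y j ≠ 0 ∧ |y j| < 1)
    (hβ : ∀ j, β < 1 / (y j) ^ 2)
    (i : V) (hmax : ∀ j, |y j| ≤ |y i|) :
    |(y i + ∑ j ∈ G.neighborFinset i, (β * y i * y j + 1) * y j) /
      (1 + ∑ j ∈ G.neighborFinset i, (β * y i * y j + 1))| ≤ |y i| ∧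
    ((∃ j ∈ G.neighborFinset i, |y j| < |y i| ∨ y i * y j < 0) →
      |(y i + ∑ j ∈ G.neighborFinset i, (β * y i * y j + 1) * y j) /
        (1 + ∑ j ∈ G.neighborFinset i, (β * y i * y j + 1))| < |y i|) := by
  classical
  obtain ⟨hyi0, hyi1⟩ := hy i
  have hyiabs : 0 < |y i| := abs_pos.mpr hyi0
  have hβi : β * (y i) ^ 2 < 1 := by
    have h := hβ i
    have hpos : (0:ℝ) < (y i) ^ 2 := by positivity
    rw [lt_div_iff₀ hpos] at h; linarith
  have hw : ∀ j, 0 < β * y i * y j + 1 := by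
    intro j
    have h1 : |y i * y j| ≤ (y i) ^ 2 := by
      rw [abs_mul]
      calc |y i| * |y j| ≤ |y i| * |y i| :=
            mul_le_mul_of_nonneg_left (hmax j) (abs_nonneg _)
        _ = (y i) ^ 2 := by rw [← sq_abs]; ring
    have h2 := neg_abs_le (y i * y j)
    nlinarith [hβ0.le]
  set S := G.neighborFinset i with hS
  have hD0 : (0:ℝ) < 1 + ∑ j ∈ S, (β * y i * y j + 1) := by
    have : 0 ≤ ∑ j ∈ S, (β * y i * y j + 1) :=
      Finset.sum_nonneg fun j _ => (hw j).le
    linarith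
  have hterm : ∀ j, j ∈ S → |(β * y i * y j + 1) * y j| ≤ (β * y i * y j + 1) * |y i| := by
    intro j _
    rw [abs_mul, abs_of_pos (hw j)]
    exact mul_le_mul_of_nonneg_left (hmax j) (hw j).le
  have hN : |y i + ∑ j ∈ S, (β * y i * y j + 1) * y j| ≤
      |y i| * (1 + ∑ j ∈ S, (β * y i * y j + 1)) := by
    calc |y i + ∑ j ∈ S, (β * y i * y j + 1) * y j|
        ≤ |y i| + |∑ j ∈ S, (β * y i * y j + 1) * y j| := abs_add_le _ _
      _ ≤ |y i| + ∑ j ∈ S, |(β * y i * y j + 1) * y j| := by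
          gcongr
          exact Finset.abs_sum_le_sum_abs _ _
      _ ≤ |y i| + ∑ j ∈ S, (β * y i * y j + 1) * |y i| := by
          gcongr with j hj
          exact hterm j hj
      _ = |y i| * (1 + ∑ j ∈ S, (β * y i * y j + 1)) := by
          rw [← Finset.sum_mul]; ring
  constructor
  · rw [abs_div, abs_of_pos hD0, div_le_iff₀ hD0]
    exact hN
  · rintro ⟨j, hj, hcase⟩
    have hsplit : ∑ k ∈ S, (β * y i * y k + 1) * y k
        = (β * y i * y j + 1) * y j + ∑ k ∈ S.erase j, (β * y i * y k + 1) * y k :=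
      (Finset.add_sum_erase S _ hj).symm
    have hsplit2 : ∑ k ∈ S, (β * y i * y k + 1)
        = (β * y i * y j + 1) + ∑ k ∈ S.erase j, (β * y i * y k + 1) :=
      (Finset.add_sum_erase S _ hj).symm
    have hwj := hw j
    have hkey : |y i + (β * y i * y j + 1) * y j| < |y i| * (1 + (β * y i * y j + 1)) := by
      rcases hcase with h | h
      · calc |y i + (β * y i * y j + 1) * y j|
            ≤ |y i| + |(β * y i * y j + 1) * y j| := abs_add_le _ _
          _ = |y i| + (β * y i * y j + 1) * |y j| := by rw [abs_mul, abs_of_pos hwj]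
          _ < |y i| + (β * y i * y j + 1) * |y i| := by nlinarith
          _ = |y i| * (1 + (β * y i * y j + 1)) := by ring
      · rw [abs_lt]
        rcases abs_cases (y i) with ⟨e1, p1⟩ | ⟨e1, p1⟩ <;>
          rcases abs_cases (y j) with ⟨e2, p2⟩ | ⟨e2, p2⟩ <;>
          constructor <;> nlinarith [hmax j]
    have hrest : |∑ k ∈ S.erase j, (β * y i * y k + 1) * y k|
        ≤ |y i| * ∑ k ∈ S.erase j, (β * y i * y k + 1) := by
      calc |∑ k ∈ S.erase j, (β * y i * y k + 1) * y k|
          ≤ ∑ k ∈ S.erase j, |(β * y i * y k + 1) * y k| := Finset.abs_sum_le_sum_abs _ _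
        _ ≤ ∑ k ∈ S.erase j, (β * y i * y k + 1) * |y i| :=
            Finset.sum_le_sum fun k hk => hterm k (Finset.mem_of_mem_erase hk)
        _ = |y i| * ∑ k ∈ S.erase j, (β * y i * y k + 1) := by
            rw [← Finset.sum_mul]; ring
    have hNstrict : |y i + ∑ k ∈ S, (β * y i * y k + 1) * y k| <
        |y i| * (1 + ∑ k ∈ S, (β * y i * y k + 1)) := by
      rw [hsplit, hsplit2]
      calc |y i + ((β * y i * y j + 1) * y j + ∑ k ∈ S.erase j, (β * y i * y k + 1) * y k)|
          ≤ |y i + (β * y i * y j + 1) * y j| +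
              |∑ k ∈ S.erase j, (β * y i * y k + 1) * y k| := by
            rw [← add_assoc]; exact abs_add_le _ _
        _ < |y i| * (1 + (β * y i * y j + 1)) +
              |y i| * ∑ k ∈ S.erase j, (β * y i * y k + 1) :=
            add_lt_add_of_lt_of_le hkey hrest
        _ = |y i| * (1 + ((β * y i * y j + 1) + ∑ k ∈ S.erase j, (β * y i * y k + 1))) := by
            ring
    rw [abs_div, abs_of_pos hD0, div_lt_iff₀ hD0]
    exact hNstrict
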